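/- arXiv:1910.11988 — 4 statements merged into one kernel-verified Lean document; each statement's English description precedes it below -/
import Mathlib

section
/- Let f_1, f_2, ... be maps on a finite set S of size k, A_n = f_n ∘ ... ∘ f_1, and M(n) the induced matrix cocycle. Every pair of elements of S synchronizes (i.e., for all s, s' there is N with A_n(s) = A_n(s') for all n ≥ N) if and only if V = {v ∈ ℝ^k : M(n)v = 0 for some n} equals the hyperplane E₀ = {v : Σᵢ vᵢ = 0}, i.e., dim V = k − 1. -/
/-- Every pair of states of a finite `k`-element set synchronizes under the
compositions `A n = f n ∘ ⋯ ∘ f 1` if and only if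
`V = {v : ∃ n, M(n)v = 0}` equals the hyperplane `E₀ = {v : ∑ i, v i = 0}`. -/
theorem stmt_10 (k : ℕ) (f : ℕ → Fin k → Fin k)
    (A : ℕ → Fin k → Fin k) (hA0 : A 0 = id) (hA : ∀ n, A (n + 1) = f (n + 1) ∘ A n)
    (M : ℕ → Matrix (Fin k) (Fin k) ℝ)
    (hM : ∀ n, M n = Matrix.of fun i j => if A n j = i then (1 : ℝ) else 0) :
    (∀ s s' : Fin k, ∃ N, ∀ n ≥ N, A n s = A n s') ↔
      {v : Fin k → ℝ | ∃ n, (M n).mulVec v = 0} =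
        {v : Fin k → ℝ | ∑ i, v i = 0} := by
  have hMv : ∀ n (v : Fin k → ℝ) (i : Fin k),
      (M n).mulVec v i = ∑ j, if A n j = i then v j else 0 := by
    intro n v i
    simp [hM n, Matrix.mulVec, dotProduct, ite_mul, one_mul, zero_mul]
  constructor
  · intro hsync
    ext v
    simp only [Set.mem_setOf_eq]
    constructor
    · rintro ⟨n, hn⟩
      have h2 : ∑ i, (M n).mulVec v i = 0 := by rw [hn]; simp
      calc ∑ i, v i = ∑ j, ∑ i, if A n j = i then v j else 0 := by
              simp [Finset.sum_ite_eq]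
        _ = ∑ i, (M n).mulVec v i := by
              rw [Finset.sum_comm]
              exact Finset.sum_congr rfl fun i _ => (hMv n v i).symm
        _ = 0 := h2
    · intro hv
      rcases Nat.eq_zero_or_pos k with hk | hk
      · refine ⟨0, funext fun i => ?_⟩
        subst hk; exact i.elim0
      · set s0 : Fin k := ⟨0, hk⟩
        choose N hN using fun s => hsync s s0
        set n := Finset.univ.sup N with hn
        refine ⟨n, funext fun i => ?_⟩
        have hconst : ∀ j, A n j = A n s0 := fun j =>
          hN j n (Finset.le_sup (Finset.mem_univ j))
        rw [hMv]
        calc ∑ j, (if A n j = i then v j else 0)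
            = ∑ j, (if A n s0 = i then v j else 0) := by
              refine Finset.sum_congr rfl fun j _ => by rw [hconst j]
          _ = (0 : Fin k → ℝ) i := by split <;> simp [hv]
  · intro hVE s s'
    by_cases hss : s = s'
    · exact ⟨0, fun n _ => by rw [hss]⟩
    set v : Fin k → ℝ := fun i => (if i = s then 1 else 0) - (if i = s' then 1 else 0)
      with hvdef
    have hvsum : ∑ i, v i = 0 := by
      simp [hvdef, Finset.sum_sub_distrib, Finset.sum_ite_eq']
    have hvV : v ∈ {v : Fin k → ℝ | ∃ n, (M n).mulVec v = 0} := by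
      rw [hVE]; exact hvsum
    obtain ⟨N, hN⟩ := hvV
    have key : ∀ (i t : Fin k),
        ∑ j, (if A N j = i then (if j = t then (1:ℝ) else 0) else 0)
          = if A N t = i then 1 else 0 := by
      intro i t
      rw [Finset.sum_eq_single t]
      · simp
      · intro j _ hj; simp [hj]
      · simp
    have hbase : A N s = A N s' := by
      have h1 := congrFun hN (A N s)
      rw [hMv] at h1
      have h2 : ∑ j, (if A N j = A N s then v j else 0)
          = (∑ j, if A N j = A N s then (if j = s then (1:ℝ) else 0) else 0)
            - (∑ j, if A N j = A N s then (if j = s' then (1:ℝ) else 0) else 0) := by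
        rw [← Finset.sum_sub_distrib]
        refine Finset.sum_congr rfl fun j _ => ?_
        simp only [hvdef]; split <;> simp
      rw [h2, key, key] at h1
      by_cases h : A N s' = A N s
      · exact h.symm
      · simp [h] at h1
    refine ⟨N, fun n hn => ?_⟩
    induction n, hn using Nat.le_induction with
    | base => exact hbase
    | succ n hn ih => rw [hA n]; simp [Function.comp, ih]
end

section
/- Let f : ℕ → ℕ (indexing states s_i) be the shift-type map with f(s_i) = s_{i−1} for i ≥ 2 and f(s_1) = s_1, M the induced operator on ℓ¹, and for λ ∈ (0,1) let v = (λ/(1−λ), −λ, −λ², −λ³, ...). Then ‖Mⁿ v‖₁ = 2λ^{n+1}/(1−λ) for all n ≥ 1, and consequently lim_{n→∞} (1/n) log ‖Mⁿ v‖₁ = log λ. Hence every value in (−∞, 0) occurs as a Lyapunov exponent of this countable-state cocycle. -/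
/-- For the shift-type map `f` on a countable state set (`f s₁ = s₁`,
`f sᵢ = s_{i-1}` for `i ≥ 2`), whose induced `ℓ¹`-operator `T` satisfies
`(T w)₁ = w₁ + w₂` and `(T w)ᵢ = w_{i+1}` for `i ≥ 2`, and for
`v = (λ/(1-λ), -λ, -λ², …)` with `0 < λ < 1`, one has
`‖Tⁿ v‖₁ = 2λ^{n+1}/(1-λ)` for all `n ≥ 1`, hence
`lim (1/n) log ‖Tⁿ v‖₁ = log λ`. In particular every value in `(-∞, 0)` occurs
as a Lyapunov exponent of this countable-state cocycle. -/
theorem stmt_14 (lam : ℝ) (h0 : 0 < lam) (h1 : lam < 1)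
    (v : ℕ → ℝ) (hv0 : v 0 = lam / (1 - lam)) (hv : ∀ i : ℕ, v (i + 1) = -lam ^ (i + 1))
    (T : (ℕ → ℝ) → (ℕ → ℝ))
    (hT : ∀ (w : ℕ → ℝ) (i : ℕ), T w i = if i = 0 then w 0 + w 1 else w (i + 1)) :
    (∀ n : ℕ, 1 ≤ n → ∑' i, |T^[n] v i| = 2 * lam ^ (n + 1) / (1 - lam)) ∧
    Filter.Tendsto (fun n : ℕ => Real.log (∑' i, |T^[n] v i|) / n)
      Filter.atTop (nhds (Real.log lam)) := by
  have hne : (1 : ℝ) - lam ≠ 0 := by linarith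
  have hpos : (0 : ℝ) < 1 - lam := by linarith
  -- explicit form of the iterates
  have key : ∀ n : ℕ, T^[n] v 0 = lam ^ (n + 1) / (1 - lam) ∧
      ∀ i : ℕ, T^[n] v (i + 1) = -lam ^ (n + i + 1) := by
    intro n
    induction n with
    | zero =>
      refine ⟨by simpa [pow_one] using hv0, fun i => by simpa using hv i⟩
    | succ n ih =>
      obtain ⟨ih0, ih1⟩ := ih
      constructor
      · rw [Function.iterate_succ_apply', hT]
        simp only [if_pos rfl, ↓reduceIte]
        rw [ih0, ih1 0]
        field_simp
        ring
      · intro i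
        rw [Function.iterate_succ_apply', hT]
        simp only [Nat.succ_ne_zero, if_false]
        rw [ih1 (i + 1)]
        ring_nf
  -- the sum for every n
  have hA : ∀ n : ℕ, ∑' i, |T^[n] v i| = 2 * lam ^ (n + 1) / (1 - lam) := by
    intro n
    have habs : ∀ i : ℕ, |T^[n] v (i + 1)| = lam ^ (n + 1) * lam ^ i := by
      intro i
      rw [(key n).2 i, abs_neg, abs_of_pos (pow_pos h0 _)]
      ring
    have hsum : Summable (fun i => |T^[n] v i|) := by
      rw [← summable_nat_add_iff 1]
      have : (fun i => |T^[n] v (i + 1)|) = fun i => lam ^ (n + 1) * lam ^ i := by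
        funext i; exact habs i
      rw [this]
      exact (summable_geometric_of_lt_one h0.le h1).mul_left _
    rw [Summable.tsum_eq_zero_add hsum]
    have h0abs : |T^[n] v 0| = lam ^ (n + 1) / (1 - lam) := by
      rw [(key n).1, abs_of_pos (div_pos (pow_pos h0 _) hpos)]
    simp only [habs, h0abs]
    rw [tsum_mul_left, tsum_geometric_of_lt_one h0.le h1]
    field_simp
    ring
  refine ⟨fun n _ => hA n, ?_⟩
  -- the limit
  have hC : (0 : ℝ) < 2 * lam / (1 - lam) := by positivity
  have hmain : Filter.Tendsto
      (fun n : ℕ => Real.log (2 * lam / (1 - lam)) / n + Real.log lam)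
      Filter.atTop (nhds (Real.log lam)) := by
    have := (tendsto_const_div_atTop_nhds_zero_nat
      (Real.log (2 * lam / (1 - lam)))).add
      (tendsto_const_nhds : Filter.Tendsto (fun _ : ℕ => Real.log lam) Filter.atTop _)
    simpa using this
  refine hmain.congr' ?_
  filter_upwards [Filter.eventually_ge_atTop 1] with n hn
  have hnne : (n : ℝ) ≠ 0 := Nat.cast_ne_zero.mpr (by omega)
  rw [hA n]
  have : 2 * lam ^ (n + 1) / (1 - lam) = (2 * lam / (1 - lam)) * lam ^ n := by
    field_simp; ring
  rw [this, Real.log_mul hC.ne' (pow_ne_zero _ h0.ne'), Real.log_pow, add_div,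
    mul_div_cancel_left₀ _ hnne]
end

section
/- Let f_1, f_2, ... be maps on a countable set S = {s_i : i ∈ ℕ}, A_n = f_n ∘ ... ∘ f_1, and M(n) the induced ℓ¹-operators. Suppose every pair in S synchronizes (for all i,j there is N with A_n(s_i) = A_n(s_j) for all n ≥ N). Then E₀ = {v ∈ ℓ¹ : Σᵢ vᵢ = 0} is contained in the closure of {v ∈ ℓ¹ : limsup (1/n) log ‖M(n)v‖₁ = −∞}. -/
open Filter

/-- `‖M(n)v‖₁` : the `ℓ¹`-norm of the image of `v` under the operator induced by
the composition `A n` of maps on the countable state set `ℕ`,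
`(M(n)v)_i = ∑_{j : A n j = i} v_j`. -/
noncomputable def cocycleNorm (A : ℕ → ℕ → ℕ) (v : lp (fun _ : ℕ => ℝ) 1) (n : ℕ) : ℝ :=
  ∑' i : ℕ, |∑' j : {j : ℕ // A n j = i}, (v : ℕ → ℝ) j|

/-- The Lyapunov exponent `limsup (1/n) log ‖M(n)v‖₁`, valued in `EReal`, with
`log 0 = ⊥`. -/
noncomputable def lyapExp (A : ℕ → ℕ → ℕ) (v : lp (fun _ : ℕ => ℝ) 1) : EReal :=
  Filter.limsup (fun n : ℕ =>
    if cocycleNorm A v n = 0 then (⊥ : EReal)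
    else ((Real.log (cocycleNorm A v n) / n : ℝ) : EReal)) Filter.atTop

lemma cocycleNorm_eq_zero (A : ℕ → ℕ → ℕ) (w : lp (fun _ : ℕ => ℝ) 1) (K n : ℕ)
    (hsupp : ∀ j, K ≤ j → (w : ℕ → ℝ) j = 0)
    (hmerge : ∀ j < K, A n j = A n 0)
    (hsum : ∑ j ∈ Finset.range K, (w : ℕ → ℝ) j = 0) :
    cocycleNorm A w n = 0 := by
  have hT : ∀ i : ℕ, (∑' j : {j : ℕ // A n j = i}, (w : ℕ → ℝ) j) = 0 := by
    intro i
    have hts : (∑' j : {j : ℕ // A n j = i}, (w : ℕ → ℝ) j)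
        = ∑' j : ℕ, ({j : ℕ | A n j = i} : Set ℕ).indicator (w : ℕ → ℝ) j :=
      tsum_subtype ({j : ℕ | A n j = i} : Set ℕ) (w : ℕ → ℝ)
    rw [hts]
    have h0 : ∀ j ∉ Finset.range K,
        ({j : ℕ | A n j = i} : Set ℕ).indicator (w : ℕ → ℝ) j = 0 := by
      intro j hj
      simp only [Finset.mem_range, not_lt] at hj
      simp [Set.indicator_apply, hsupp j hj]
    rw [tsum_eq_sum h0]
    by_cases hi : i = A n 0
    · subst hi
      rw [← hsum]
      apply Finset.sum_congr rfl
      intro j hj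
      simp only [Finset.mem_range] at hj
      simp [Set.indicator_apply, hmerge j hj]
    · apply Finset.sum_eq_zero
      intro j hj
      simp only [Finset.mem_range] at hj
      have : A n j ≠ i := by rw [hmerge j hj]; exact fun h => hi h.symm
      simp [Set.indicator_apply, this]
  simp [cocycleNorm, hT]


/-- If every pair of states of a countable state set synchronizes under the
compositions `A n = f n ∘ ⋯ ∘ f 1`, then the hyperplane
`E₀ = {v ∈ ℓ¹ : ∑ᵢ vᵢ = 0}` is contained in the closure of the set of vectors
with Lyapunov exponent `−∞`. -/
theorem stmt_15 (f : ℕ → ℕ → ℕ) (A : ℕ → ℕ → ℕ)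
    (hA0 : A 0 = id) (hA : ∀ n, A (n + 1) = f (n + 1) ∘ A n)
    (hsync : ∀ i j : ℕ, ∃ N, ∀ n ≥ N, A n i = A n j) :
    {v : lp (fun _ : ℕ => ℝ) 1 | ∑' i, (v : ℕ → ℝ) i = 0} ⊆
      closure {v : lp (fun _ : ℕ => ℝ) 1 | lyapExp A v = ⊥} := by
  intro v hv
  rw [Metric.mem_closure_iff]
  intro ε hε
  -- summability of |v|
  have hmem : Memℓp (v : ℕ → ℝ) 1 := lp.memℓp v
  have habs : Summable (fun i => |(v : ℕ → ℝ) i|) := by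
    have := hmem.summable (by norm_num : (0:ℝ) < (1 : ENNReal).toReal)
    simpa using this
  have hsumv : Summable (fun i => (v : ℕ → ℝ) i) := Summable.of_abs habs
  -- choose K with small tail
  have htail : Tendsto (fun k => ∑' i : ℕ, |(v : ℕ → ℝ) (i + k)|) atTop (nhds 0) :=
    tendsto_sum_nat_add (fun j => |(v : ℕ → ℝ) j|)
  obtain ⟨K, hK⟩ : ∃ K, ∑' i : ℕ, |(v : ℕ → ℝ) (i + K)| < ε / 2 := by
    have := (htail.eventually (eventually_lt_nhds (by linarith : (0:ℝ) < ε / 2))).exists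
    exact this
  set S : ℝ := ∑ j ∈ Finset.range K, (v : ℕ → ℝ) j with hS
  -- the approximating vector
  set w : ℕ → ℝ := fun j => if j < K then (v : ℕ → ℝ) j else if j = K then -S else 0 with hw
  have hwsupp : ∀ j, K + 1 ≤ j → w j = 0 := by
    intro j hj
    simp only [hw]
    rw [if_neg (by omega), if_neg (by omega)]
  have hwmem : Memℓp w 1 := by
    apply memℓp_gen
    apply summable_of_ne_finset_zero (s := Finset.range (K + 1))
    intro j hj
    simp only [Finset.mem_range, not_lt] at hj
    simp [hwsupp j hj]
  set w' : lp (fun _ : ℕ => ℝ) 1 := ⟨w, hwmem⟩ with hw'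
  have hcoe : (w' : ℕ → ℝ) = w := rfl
  refine ⟨w', ?_, ?_⟩
  · -- lyapExp A w' = ⊥
    show lyapExp A w' = ⊥
    -- merging time
    have hN : ∃ N, ∀ n ≥ N, ∀ j < K + 1, A n j = A n 0 := by
      choose N hNs using fun j => hsync j 0
      refine ⟨(Finset.range (K + 1)).sup N, fun n hn j hj => ?_⟩
      exact hNs j n (le_trans (Finset.le_sup (Finset.mem_range.mpr hj)) hn)
    obtain ⟨N, hN⟩ := hN
    have hzero : ∀ n ≥ N, cocycleNorm A w' n = 0 := by
      intro n hn
      apply cocycleNorm_eq_zero A w' (K + 1) n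
      · intro j hj; rw [hcoe]; exact hwsupp j hj
      · exact hN n hn
      · rw [hcoe]
        rw [Finset.sum_range_succ]
        have : ∑ j ∈ Finset.range K, w j = S := by
          apply Finset.sum_congr rfl
          intro j hj
          simp only [Finset.mem_range] at hj
          simp [hw, hj]
        rw [this]
        simp [hw]
    have : lyapExp A w' = Filter.limsup (fun _ : ℕ => (⊥ : EReal)) atTop := by
      apply Filter.limsup_congr
      filter_upwards [eventually_ge_atTop N] with n hn
      rw [if_pos (hzero n hn)]
    rw [this, Filter.limsup_const]
  · -- dist v w' < ε
    have hd : ((v - w' : lp (fun _ : ℕ => ℝ) 1) : ℕ → ℝ) = (v : ℕ → ℝ) - w := by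
      rw [lp.coeFn_sub, hcoe]
    have hdmem : Memℓp ((v : ℕ → ℝ) - w) 1 := by rw [← hd]; exact lp.memℓp _
    have hdsum : Summable (fun i => |(v : ℕ → ℝ) i - w i|) := by
      have := hdmem.summable (by norm_num : (0:ℝ) < (1 : ENNReal).toReal)
      simpa using this
    have hnorm : dist v w' = ∑' i : ℕ, |(v : ℕ → ℝ) i - w i| := by
      rw [dist_eq_norm, lp.norm_eq_tsum_rpow (by norm_num) (v - w')]
      simp [hd]
    rw [hnorm]
    -- split the sum
    have hsplit : ∑' i : ℕ, |(v : ℕ → ℝ) i - w i|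
        = ∑ i ∈ Finset.range (K + 1), |(v : ℕ → ℝ) i - w i|
          + ∑' i : ℕ, |(v : ℕ → ℝ) (i + (K + 1)) - w (i + (K + 1))| := by
      rw [Summable.sum_add_tsum_nat_add (K + 1) hdsum]
    have hheadzero : ∀ j < K, |(v : ℕ → ℝ) j - w j| = 0 := by
      intro j hj; simp [hw, hj]
    have hhead : ∑ i ∈ Finset.range (K + 1), |(v : ℕ → ℝ) i - w i|
        = |(v : ℕ → ℝ) K + S| := by
      rw [Finset.sum_range_succ]
      rw [Finset.sum_eq_zero (fun j hj => hheadzero j (Finset.mem_range.mp hj))]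
      simp [hw, sub_neg_eq_add]
    have htailw : ∀ i : ℕ, w (i + (K + 1)) = 0 := fun i => hwsupp _ (by omega)
    have htail2 : ∑' i : ℕ, |(v : ℕ → ℝ) (i + (K + 1)) - w (i + (K + 1))|
        = ∑' i : ℕ, |(v : ℕ → ℝ) (i + (K + 1))| := by
      apply tsum_congr; intro i; rw [htailw i, sub_zero]
    -- tail of |v| at K
    have hTK : ∑' i : ℕ, |(v : ℕ → ℝ) (i + K)|
        = |(v : ℕ → ℝ) K| + ∑' i : ℕ, |(v : ℕ → ℝ) (i + (K + 1))| := by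
      rw [Summable.tsum_eq_zero_add (by exact (summable_nat_add_iff (f := fun j => |(v : ℕ → ℝ) j|) K).mpr habs)]
      simp only [zero_add]
      congr 1
      apply tsum_congr; intro i
      have h : i + 1 + K = i + (K + 1) := by omega
      rw [h]
    -- |S| bound : S = - tail sum of v
    have hSsum : S + ∑' i : ℕ, (v : ℕ → ℝ) (i + K) = 0 := by
      rw [hS, Summable.sum_add_tsum_nat_add K hsumv]; exact hv
    have habstail : Summable (fun i : ℕ => |(v : ℕ → ℝ) (i + K)|) :=
      (summable_nat_add_iff (f := fun j => |(v : ℕ → ℝ) j|) K).mpr habs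
    have hSbound : |S| ≤ ∑' i : ℕ, |(v : ℕ → ℝ) (i + K)| := by
      have hSeq : S = -∑' i : ℕ, (v : ℕ → ℝ) (i + K) := by linarith
      have hb := norm_tsum_le_tsum_norm (f := fun i : ℕ => (v : ℕ → ℝ) (i + K))
        (by simpa [Real.norm_eq_abs] using habstail)
      simp only [Real.norm_eq_abs] at hb
      rw [hSeq, abs_neg]
      exact hb
    have hvKabs : |(v : ℕ → ℝ) K + S| ≤ |(v : ℕ → ℝ) K| + |S| := abs_add_le _ _
    have htail3 : ∑' i : ℕ, |(v : ℕ → ℝ) (i + (K + 1))|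
        ≤ ∑' i : ℕ, |(v : ℕ → ℝ) (i + K)| := by
      rw [hTK]; linarith [abs_nonneg ((v : ℕ → ℝ) K)]
    calc ∑' i : ℕ, |(v : ℕ → ℝ) i - w i|
        = |(v : ℕ → ℝ) K + S| + ∑' i : ℕ, |(v : ℕ → ℝ) (i + (K + 1))| := by
          rw [hsplit, hhead, htail2]
      _ ≤ (|(v : ℕ → ℝ) K| + |S|) + ∑' i : ℕ, |(v : ℕ → ℝ) (i + (K + 1))| := by linarith
      _ = (∑' i : ℕ, |(v : ℕ → ℝ) (i + K)|) + |S| := by rw [hTK]; ring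
      _ ≤ (∑' i : ℕ, |(v : ℕ → ℝ) (i + K)|) + ∑' i : ℕ, |(v : ℕ → ℝ) (i + K)| := by
          linarith
      _ < ε := by linarith
end

section
/- Let f_1, f_2, ... be maps on a countable set S = {s_i : i ∈ ℕ}, A_n = f_n ∘ ... ∘ f_1, and M(n) the induced ℓ¹-operators. If v ∈ ℓ¹ has Σᵢ vᵢ = a ≠ 0 and every pair in S synchronizes, then there exists c > 0 such that ‖M(n)v‖₁ ≥ c for all sufficiently large n; in particular limsup (1/n) log ‖M(n)v‖₁ = 0 ≠ −∞. Hence the closure of {v : Lyapunov exponent is −∞} is contained in E₀ = {v ∈ ℓ¹ : Σᵢ vᵢ = 0}. -/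
open Filter Topology

private lemma aux_core (g : ℕ → ℕ) (v : ℕ → ℝ) (hv : Summable fun i => |v i|) :
    Summable (fun i : ℕ => |∑' j : {j : ℕ // g j = i}, v j|) ∧
    |∑' j, v j| ≤ (∑' i : ℕ, |∑' j : {j : ℕ // g j = i}, v j|) ∧
    (∑' i : ℕ, |∑' j : {j : ℕ // g j = i}, v j|) ≤ ∑' i, |v i| := by
  have hs : Summable fun p : Σ i, {j : ℕ // g j = i} => |v p.2.1| :=
    (Equiv.sigmaFiberEquiv g).summable_iff.mpr hv
  have hs' : Summable fun p : Σ i, {j : ℕ // g j = i} => v p.2.1 := hs.of_abs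
  have inner_le : ∀ i : ℕ, |∑' j : {j : ℕ // g j = i}, v j| ≤ ∑' j : {j : ℕ // g j = i}, |v j.1| := by
    intro i
    simpa [Real.norm_eq_abs] using
      norm_tsum_le_tsum_norm (f := fun j : {j : ℕ // g j = i} => v j.1)
        (by simpa [Real.norm_eq_abs] using hs.sigma_factor i)
  have hT : Summable fun i : ℕ => ∑' j : {j : ℕ // g j = i}, |v j.1| := hs.sigma
  have hSsum : Summable (fun i : ℕ => |∑' j : {j : ℕ // g j = i}, v j|) :=
    Summable.of_nonneg_of_le (fun i => abs_nonneg _) inner_le hT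
  have total : (∑' i : ℕ, ∑' j : {j : ℕ // g j = i}, v j) = ∑' j, v j := by
    rw [← Summable.tsum_sigma hs']
    exact (Equiv.sigmaFiberEquiv g).tsum_eq (fun j => v j)
  have total_abs : (∑' i : ℕ, ∑' j : {j : ℕ // g j = i}, |v j.1|) = ∑' j, |v j| := by
    rw [← Summable.tsum_sigma hs]
    exact (Equiv.sigmaFiberEquiv g).tsum_eq (fun j => |v j|)
  refine ⟨hSsum, ?_, ?_⟩
  · rw [← total]
    simpa [Real.norm_eq_abs] using
      norm_tsum_le_tsum_norm (f := fun i : ℕ => ∑' j : {j : ℕ // g j = i}, v j)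
        (by simpa [Real.norm_eq_abs] using hSsum)
  · rw [← total_abs]
    exact Summable.tsum_le_tsum inner_le hSsum hT

private lemma aux_abs (v : lp (fun _ : ℕ => ℝ) 1) :
    Summable fun i => |(v : ℕ → ℝ) i| := by
  have := lp.memℓp v
  rw [memℓp_gen_iff (by norm_num)] at this
  simpa using this

/-- Suppose every pair of states of a countable state set synchronizes under the
compositions `A n = f n ∘ ⋯ ∘ f 1`. If `v ∈ ℓ¹` has nonzero coordinate sum, then
`‖M(n)v‖₁` is bounded below by a positive constant for all large `n`, and the
Lyapunov exponent of `v` is `0` (in particular not `−∞`). Consequently the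
closure of the set of vectors with Lyapunov exponent `−∞` is contained in
`E₀ = {v ∈ ℓ¹ : ∑ᵢ vᵢ = 0}`. -/
theorem stmt_16 (f : ℕ → ℕ → ℕ) (A : ℕ → ℕ → ℕ)
    (hA0 : A 0 = id) (hA : ∀ n, A (n + 1) = f (n + 1) ∘ A n)
    (hsync : ∀ i j : ℕ, ∃ N, ∀ n ≥ N, A n i = A n j) :
    (∀ v : lp (fun _ : ℕ => ℝ) 1, (∑' i, (v : ℕ → ℝ) i) ≠ 0 →
      (∃ c > (0 : ℝ), ∃ N, ∀ n ≥ N, c ≤ cocycleNorm A v n) ∧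
      lyapExp A v = (0 : EReal)) ∧
    closure {v : lp (fun _ : ℕ => ℝ) 1 | lyapExp A v = ⊥} ⊆
      {v : lp (fun _ : ℕ => ℝ) 1 | ∑' i, (v : ℕ → ℝ) i = 0} := by
  have main : ∀ v : lp (fun _ : ℕ => ℝ) 1, (∑' i, (v : ℕ → ℝ) i) ≠ 0 →
      (∃ c > (0:ℝ), ∃ N, ∀ n ≥ N, c ≤ cocycleNorm A v n) ∧ lyapExp A v = (0 : EReal) := by
    intro v hv0
    set a := ∑' i, (v : ℕ → ℝ) i with ha
    set C := ∑' i, |(v : ℕ → ℝ) i| with hC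
    have key := fun n => aux_core (A n) _ (aux_abs v)
    have hlow : ∀ n, |a| ≤ cocycleNorm A v n := fun n => (key n).2.1
    have hup : ∀ n, cocycleNorm A v n ≤ C := fun n => (key n).2.2
    have hapos : 0 < |a| := abs_pos.mpr hv0
    have hcpos : ∀ n, 0 < cocycleNorm A v n := fun n => lt_of_lt_of_le hapos (hlow n)
    refine ⟨⟨|a|, hapos, 0, fun n _ => hlow n⟩, ?_⟩
    set B := max (abs (Real.log (abs a))) (abs (Real.log C)) with hB
    have hlogb : ∀ n, |Real.log (cocycleNorm A v n)| ≤ B := by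
      intro n
      rw [abs_le]
      constructor
      · calc -B ≤ -(abs (Real.log (abs a))) := neg_le_neg (le_max_left _ _)
          _ ≤ Real.log (abs a) := neg_abs_le _
          _ ≤ _ := Real.log_le_log hapos (hlow n)
      · calc Real.log (cocycleNorm A v n) ≤ Real.log C := Real.log_le_log (hcpos n) (hup n)
          _ ≤ abs (Real.log C) := le_abs_self _
          _ ≤ B := le_max_right _ _
    have htend : Tendsto (fun n : ℕ => Real.log (cocycleNorm A v n) / n) atTop (𝓝 0) := by
      apply squeeze_zero_norm' ?_
        (tendsto_const_div_atTop_nhds_zero_nat B)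
      filter_upwards [eventually_gt_atTop 0] with n hn
      have hn' : (0:ℝ) < n := by exact_mod_cast hn
      rw [Real.norm_eq_abs, abs_div, abs_of_pos hn']
      gcongr
      exact hlogb n
    have htendE : Tendsto (fun n : ℕ =>
        ((Real.log (cocycleNorm A v n) / n : ℝ) : EReal)) atTop (𝓝 (0 : EReal)) := by
      have : ((0:ℝ) : EReal) = (0 : EReal) := rfl
      rw [← this]
      exact EReal.tendsto_coe.mpr htend
    unfold lyapExp
    have heq : (fun n : ℕ => if cocycleNorm A v n = 0 then (⊥:EReal)
        else ((Real.log (cocycleNorm A v n) / n : ℝ) : EReal)) =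
        fun n : ℕ => ((Real.log (cocycleNorm A v n) / n : ℝ) : EReal) := by
      funext n; rw [if_neg (ne_of_gt (hcpos n))]
    rw [heq]
    exact htendE.limsup_eq
  have hL : LipschitzWith 1 (fun v : lp (fun _ : ℕ => ℝ) 1 => ∑' i, (v : ℕ → ℝ) i) := by
    apply LipschitzWith.of_dist_le_mul
    intro v w
    rw [NNReal.coe_one, one_mul, dist_eq_norm, dist_eq_norm]
    have h1 : Summable fun i => (v : ℕ → ℝ) i := (aux_abs v).of_abs
    have h2 : Summable fun i => (w : ℕ → ℝ) i := (aux_abs w).of_abs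
    have h3 : Summable fun i => |(v : ℕ → ℝ) i - (w : ℕ → ℝ) i| := by
      simpa [lp.coeFn_sub, Pi.sub_apply] using aux_abs (v - w)
    calc ‖(∑' i, (v : ℕ → ℝ) i) - ∑' i, (w : ℕ → ℝ) i‖
        = ‖∑' i, ((v : ℕ → ℝ) i - (w : ℕ → ℝ) i)‖ := by rw [Summable.tsum_sub h1 h2]
      _ ≤ ∑' i, ‖(v : ℕ → ℝ) i - (w : ℕ → ℝ) i‖ :=
          norm_tsum_le_tsum_norm (by simpa [Real.norm_eq_abs] using h3)
      _ = ‖v - w‖ := by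
          rw [lp.norm_eq_tsum_rpow (by norm_num)]
          simp [lp.coeFn_sub, Pi.sub_apply, Real.norm_eq_abs]
  have hclosed : IsClosed {v : lp (fun _ : ℕ => ℝ) 1 | ∑' i, (v : ℕ → ℝ) i = 0} :=
    isClosed_eq hL.continuous continuous_const
  refine ⟨main, closure_minimal ?_ hclosed⟩
  intro v hv
  by_contra h
  have h0 := (main v h).2
  rw [Set.mem_setOf_eq] at hv
  rw [hv] at h0
  exact absurd h0 (by simp)
end
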